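/- arXiv:1612.06061 — 3 statements merged into one kernel-verified Lean document; each statement's English description precedes it below -/
import Mathlib

section
/- Let Z_1,...,Z_p be random variables with 0 < z_min ≤ Z_i ≤ 1 almost surely for all i, where z_min ∈ (0,1). Then E[∏_{i=1}^p Z_i] ≥ (∏_{i=1}^p E[Z_i])^{1/z_min}. -/
open MeasureTheory

/-- If `Z 1, ..., Z p` are random variables on a probability space with
`0 < zmin ≤ Z i ≤ 1` almost surely (`zmin ∈ (0,1)`), then
`E[∏ Z i] ≥ (∏ E[Z i]) ^ (1/zmin)`. -/
theorem bar_product_expectation_lower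
    {Ω : Type*} [MeasurableSpace Ω] (μ : Measure Ω) [IsProbabilityMeasure μ]
    (p : ℕ) (Z : Fin p → Ω → ℝ) (zmin : ℝ)
    (hzmin : 0 < zmin) (hzmin1 : zmin < 1)
    (hmeas : ∀ i, Measurable (Z i))
    (hbound : ∀ i, ∀ᵐ ω ∂μ, zmin ≤ Z i ω ∧ Z i ω ≤ 1) :
    (∏ i, ∫ ω, Z i ω ∂μ) ^ ((1 : ℝ) / zmin) ≤ ∫ ω, ∏ i, Z i ω ∂μ := by
  set a : Fin p → ℝ := fun i => ∫ ω, Z i ω ∂μ with ha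
  -- integrability of Z i
  have hZint : ∀ i, Integrable (Z i) μ := by
    intro i
    refine (integrable_const (1:ℝ)).mono' (hmeas i).aestronglyMeasurable ?_
    filter_upwards [hbound i] with ω ⟨h1, h2⟩
    rw [Real.norm_eq_abs, abs_le]
    constructor <;> linarith
  -- a i ≥ zmin
  have haz : ∀ i, zmin ≤ a i := by
    intro i
    have : ∫ ω, (zmin : ℝ) ∂μ ≤ ∫ ω, Z i ω ∂μ := by
      refine integral_mono_ae (integrable_const _) (hZint i) ?_
      filter_upwards [hbound i] with ω ⟨h1, _⟩ using h1
    simpa using this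
  have hapos : ∀ i, 0 < a i := fun i => lt_of_lt_of_le hzmin (haz i)
  -- log Z i integrable
  have hlogint : ∀ i, Integrable (fun ω => Real.log (Z i ω)) μ := by
    intro i
    refine (integrable_const (-Real.log zmin)).mono'
      ((hmeas i).log.aestronglyMeasurable) ?_
    filter_upwards [hbound i] with ω ⟨h1, h2⟩
    have hz0 : 0 < Z i ω := lt_of_lt_of_le hzmin h1
    have hlo : Real.log zmin ≤ Real.log (Z i ω) := Real.log_le_log hzmin h1
    have hhi : Real.log (Z i ω) ≤ 0 := Real.log_nonpos (le_of_lt hz0) h2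
    have hzl : Real.log zmin < 0 := Real.log_neg hzmin hzmin1
    rw [Real.norm_eq_abs, abs_le]
    constructor <;> linarith
  -- pointwise: (z-1)/zmin ≤ log z on [zmin,1]
  have key : ∀ x : ℝ, zmin ≤ x → x ≤ 1 → (x - 1) / zmin ≤ Real.log x := by
    intro x h1 h2
    have hx0 : 0 < x := lt_of_lt_of_le hzmin h1
    have h3 : 1 - x⁻¹ ≤ Real.log x := Real.one_sub_inv_le_log_of_pos hx0
    have h4 : (x - 1) / zmin ≤ 1 - x⁻¹ := by
      rw [div_le_iff₀ hzmin]
      have : (1 - x⁻¹) * x = x - 1 := by field_simp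
      nlinarith [mul_pos hx0 hzmin]
    linarith
  -- ∫ log Z i ≥ (a i - 1)/zmin
  have step1 : ∀ i, (a i - 1) / zmin ≤ ∫ ω, Real.log (Z i ω) ∂μ := by
    intro i
    have : ∫ ω, (Z i ω - 1) / zmin ∂μ ≤ ∫ ω, Real.log (Z i ω) ∂μ := by
      refine integral_mono_ae (((hZint i).sub (integrable_const 1)).div_const _)
        (hlogint i) ?_
      filter_upwards [hbound i] with ω ⟨h1, h2⟩ using key _ h1 h2
    calc (a i - 1) / zmin = ∫ ω, (Z i ω - 1) / zmin ∂μ := by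
          rw [integral_div, integral_sub (hZint i) (integrable_const 1)]
          simp [ha]
      _ ≤ _ := this
  -- log a i ≤ a i - 1
  have step2 : ∀ i, Real.log (a i) / zmin ≤ ∫ ω, Real.log (Z i ω) ∂μ := by
    intro i
    have h1 : Real.log (a i) ≤ a i - 1 := Real.log_le_sub_one_of_pos (hapos i)
    have := step1 i
    have h2 : Real.log (a i) / zmin ≤ (a i - 1) / zmin :=
      div_le_div_of_nonneg_right h1 hzmin.le |>.trans_eq rfl
    linarith
  -- the function ∑ log Z i
  set Y : Ω → ℝ := fun ω => ∑ i, Real.log (Z i ω) with hY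
  have hYint : Integrable Y μ := integrable_finset_sum _ (fun i _ => hlogint i)
  have hYle : (∑ i, Real.log (a i)) / zmin ≤ ∫ ω, Y ω ∂μ := by
    rw [hY, integral_finset_sum _ (fun i _ => hlogint i), Finset.sum_div]
    exact Finset.sum_le_sum fun i _ => step2 i
  -- a.e. bound on product
  have hball : ∀ᵐ ω ∂μ, ∀ i, zmin ≤ Z i ω ∧ Z i ω ≤ 1 := ae_all_iff.mpr hbound
  -- exp Y = ∏ Z a.e.
  have hexpY : ∀ᵐ ω ∂μ, Real.exp (Y ω) = ∏ i, Z i ω := by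
    filter_upwards [hball] with ω hω
    rw [hY, Real.exp_sum]
    exact Finset.prod_congr rfl fun i _ =>
      Real.exp_log (lt_of_lt_of_le hzmin (hω i).1)
  -- ∏ Z integrable
  have hprodint : Integrable (fun ω => ∏ i, Z i ω) μ := by
    refine (integrable_const (1:ℝ)).mono'
      ((Finset.measurable_prod _ (fun i _ => hmeas i)).aestronglyMeasurable) ?_
    filter_upwards [hball] with ω hω
    rw [Real.norm_eq_abs, abs_of_nonneg
      (Finset.prod_nonneg fun i _ => le_of_lt (lt_of_lt_of_le hzmin (hω i).1))]
    exact Finset.prod_le_one (fun i _ => le_of_lt (lt_of_lt_of_le hzmin (hω i).1))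
      (fun i _ => (hω i).2)
  have hexpint : Integrable (Real.exp ∘ Y) μ := hprodint.congr (by
    filter_upwards [hexpY] with ω h using h.symm)
  -- Jensen
  have jensen : Real.exp (∫ ω, Y ω ∂μ) ≤ ∫ ω, Real.exp (Y ω) ∂μ :=
    convexOn_exp.map_integral_le Real.continuous_exp.continuousOn isClosed_univ
      (Filter.Eventually.of_forall fun _ => Set.mem_univ _) hYint hexpint
  have hfinal : ∫ ω, Real.exp (Y ω) ∂μ = ∫ ω, ∏ i, Z i ω ∂μ :=
    integral_congr_ae hexpY
  -- LHS rewrite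
  have hlhs : (∏ i, a i) ^ ((1 : ℝ) / zmin) =
      Real.exp ((∑ i, Real.log (a i)) / zmin) := by
    rw [Real.rpow_def_of_pos (Finset.prod_pos fun i _ => hapos i),
      Real.log_prod (fun i _ => ne_of_gt (hapos i))]
    ring_nf
  calc (∏ i, a i) ^ ((1 : ℝ) / zmin)
      = Real.exp ((∑ i, Real.log (a i)) / zmin) := hlhs
    _ ≤ Real.exp (∫ ω, Y ω ∂μ) := Real.exp_le_exp.mpr hYle
    _ ≤ ∫ ω, Real.exp (Y ω) ∂μ := jensen
    _ = ∫ ω, ∏ i, Z i ω ∂μ := hfinal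
end

section
/- Let Z_1,...,Z_p be random variables with 1 ≤ Z_i ≤ z_max almost surely for all i, where z_max ≥ 1. Then E[∏_{i=1}^p Z_i] ≥ (∏_{i=1}^p E[Z_i])^{1/z_max}. -/
open MeasureTheory

/-- If `Z 1, ..., Z p` are random variables on a probability space with
`1 ≤ Z i ≤ zmax` almost surely (`zmax ≥ 1`), then
`E[∏ Z i] ≥ (∏ E[Z i]) ^ (1/zmax)`. -/
theorem bar_product_expectation_lower_above_one
    {Ω : Type*} [MeasurableSpace Ω] (μ : Measure Ω) [IsProbabilityMeasure μ]
    (p : ℕ) (Z : Fin p → Ω → ℝ) (zmax : ℝ)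
    (hzmax : 1 ≤ zmax)
    (hmeas : ∀ i, Measurable (Z i))
    (hbound : ∀ i, ∀ᵐ ω ∂μ, 1 ≤ Z i ω ∧ Z i ω ≤ zmax) :
    (∏ i, ∫ ω, Z i ω ∂μ) ^ ((1 : ℝ) / zmax) ≤ ∫ ω, ∏ i, Z i ω ∂μ := by
  have hzpos : (0 : ℝ) < zmax := lt_of_lt_of_le one_pos hzmax
  -- integrability of each Z i
  have hZint : ∀ i, Integrable (Z i) μ := by
    intro i
    refine (integrable_const zmax).mono' (hmeas i).aestronglyMeasurable ?_
    filter_upwards [hbound i] with ω h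
    rw [Real.norm_eq_abs, abs_le]
    constructor <;> linarith [h.1, h.2]
  -- each mean is at least 1
  have hZ1 : ∀ i, 1 ≤ ∫ ω, Z i ω ∂μ := by
    intro i
    have := integral_mono_ae (integrable_const (1 : ℝ)) (hZint i)
      ((hbound i).mono fun ω h => h.1)
    simpa using this
  -- integrability of log ∘ Z i
  have hlogint : ∀ i, Integrable (fun ω => Real.log (Z i ω)) μ := by
    intro i
    refine (integrable_const zmax).mono'
      (Real.measurable_log.comp (hmeas i)).aestronglyMeasurable ?_
    filter_upwards [hbound i] with ω h
    rw [Real.norm_eq_abs, abs_of_nonneg (Real.log_nonneg h.1)]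
    have := Real.log_le_sub_one_of_pos (show (0:ℝ) < Z i ω by linarith [h.1])
    linarith [h.2]
  -- per-variable key inequality : log (E Z i) / zmax ≤ E (log Z i)
  have key : ∀ i, Real.log (∫ ω, Z i ω ∂μ) / zmax ≤ ∫ ω, Real.log (Z i ω) ∂μ := by
    intro i
    have step1 : ∫ ω, (Z i ω - 1) / zmax ∂μ ≤ ∫ ω, Real.log (Z i ω) ∂μ := by
      refine integral_mono_ae (((hZint i).sub (integrable_const 1)).div_const zmax)
        (hlogint i) ?_
      filter_upwards [hbound i] with ω h
      have hz0 : (0:ℝ) < Z i ω := by linarith [h.1]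
      have hinv : Z i ω * (Z i ω)⁻¹ = 1 := mul_inv_cancel₀ (ne_of_gt hz0)
      have hlog : 1 - (Z i ω)⁻¹ ≤ Real.log (Z i ω) := by
        have := Real.log_le_sub_one_of_pos (inv_pos.mpr hz0)
        rw [Real.log_inv] at this
        linarith
      rw [div_le_iff₀ hzpos]
      have hinvpos : (0:ℝ) < (Z i ω)⁻¹ := inv_pos.mpr hz0
      nlinarith [h.1, h.2, mul_le_mul_of_nonneg_right hlog (le_of_lt hzpos),
        mul_nonneg (mul_nonneg (sub_nonneg.mpr h.2) (sub_nonneg.mpr h.1)) hinvpos.le]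
    have step2 : ∫ ω, (Z i ω - 1) / zmax ∂μ = ((∫ ω, Z i ω ∂μ) - 1) / zmax := by
      rw [integral_div, integral_sub (hZint i) (integrable_const 1)]
      simp
    have step3 : Real.log (∫ ω, Z i ω ∂μ) ≤ (∫ ω, Z i ω ∂μ) - 1 :=
      Real.log_le_sub_one_of_pos (by linarith [hZ1 i])
    rw [step2] at step1
    calc Real.log (∫ ω, Z i ω ∂μ) / zmax ≤ ((∫ ω, Z i ω ∂μ) - 1) / zmax := by
          exact div_le_div_of_nonneg_right step3 hzpos.le
      _ ≤ _ := step1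
  -- all-i a.e. bound
  have hboundall : ∀ᵐ ω ∂μ, ∀ i, 1 ≤ Z i ω ∧ Z i ω ≤ zmax := ae_all_iff.mpr hbound
  -- integrability of the product
  have hprodint : Integrable (fun ω => ∏ i, Z i ω) μ := by
    refine (integrable_const (zmax ^ p)).mono'
      (Finset.measurable_prod Finset.univ fun i _ => hmeas i).aestronglyMeasurable ?_
    filter_upwards [hboundall] with ω h
    rw [Real.norm_eq_abs, abs_of_nonneg (Finset.prod_nonneg fun i _ => by linarith [(h i).1])]
    calc ∏ i, Z i ω ≤ ∏ _i : Fin p, zmax :=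
          Finset.prod_le_prod (fun i _ => by linarith [(h i).1]) (fun i _ => (h i).2)
      _ = zmax ^ p := by simp
  -- a.e. equality exp (∑ log Z i) = ∏ Z i
  have haeeq : (fun ω => Real.exp (∑ i, Real.log (Z i ω))) =ᶠ[ae μ] fun ω => ∏ i, Z i ω := by
    filter_upwards [hboundall] with ω h
    rw [Real.exp_sum]
    exact Finset.prod_congr rfl fun i _ => Real.exp_log (by linarith [(h i).1])
  -- Jensen
  have hYint : Integrable (fun ω => ∑ i, Real.log (Z i ω)) μ :=
    integrable_finset_sum _ fun i _ => hlogint i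
  have hexpint : Integrable (fun ω => Real.exp (∑ i, Real.log (Z i ω))) μ :=
    hprodint.congr haeeq.symm
  have jensen : Real.exp (∫ ω, ∑ i, Real.log (Z i ω) ∂μ) ≤
      ∫ ω, Real.exp (∑ i, Real.log (Z i ω)) ∂μ :=
    convexOn_exp.map_integral_le Real.continuous_exp.continuousOn isClosed_univ
      (Filter.Eventually.of_forall fun _ => Set.mem_univ _) hYint hexpint
  have hint_eq : ∫ ω, Real.exp (∑ i, Real.log (Z i ω)) ∂μ = ∫ ω, ∏ i, Z i ω ∂μ :=
    integral_congr_ae haeeq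
  rw [hint_eq] at jensen
  -- rewrite LHS
  have hm_pos : ∀ i, (0:ℝ) < ∫ ω, Z i ω ∂μ := fun i => by linarith [hZ1 i]
  have hprod_pos : (0:ℝ) < ∏ i, ∫ ω, Z i ω ∂μ :=
    Finset.prod_pos fun i _ => hm_pos i
  have hLHS : (∏ i, ∫ ω, Z i ω ∂μ) ^ ((1:ℝ)/zmax) =
      Real.exp (∑ i, Real.log (∫ ω, Z i ω ∂μ) / zmax) := by
    rw [Real.rpow_def_of_pos hprod_pos, Real.log_prod fun i _ => ne_of_gt (hm_pos i),
      Finset.sum_mul]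
    congr 1
    exact Finset.sum_congr rfl fun i _ => by ring
  rw [hLHS]
  refine le_trans ?_ jensen
  apply Real.exp_le_exp.mpr
  rw [integral_finset_sum _ fun i _ => hlogint i]
  exact Finset.sum_le_sum fun i _ => key i
end

section
/- Let Z_1,...,Z_p be random variables such that Z_1,...,Z_k take values in [z_min,1] almost surely (with 0 < z_min < 1) and Z_{k+1},...,Z_p take values in [1,z_max] almost surely (with z_max ≥ 1). Then E[∏_{i=1}^p Z_i] ≥ (∏_{i=1}^k E[Z_i])^{1/z_min} · (∏_{i=k+1}^p E[Z_i])^{1/z_max}. -/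
open MeasureTheory

/-- Key pointwise inequality: if `0 < c`, `0 < z` and `(z-1)*(c-z) ≥ 0`
(i.e. `z` is between `min 1 c` and `max 1 c`), then `exp ((z-1)/c) ≤ z`. -/
lemma exp_sub_one_div_le {c z : ℝ} (hc : 0 < c) (hz : 0 < z)
    (h : 0 ≤ (z - 1) * (c - z)) : Real.exp ((z - 1) / c) ≤ z := by
  have hden : 0 < c + 1 - z := by
    rcases le_or_gt z 1 with h1 | h1
    · linarith
    · nlinarith
  have h1 : (c + 1 - z) / c ≤ Real.exp (-((z - 1) / c)) := by
    have := Real.add_one_le_exp (-((z - 1) / c))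
    have heq : -((z - 1) / c) + 1 = (c + 1 - z) / c := by field_simp; ring
    linarith [heq ▸ this]
  have hposd : 0 < (c + 1 - z) / c := div_pos hden hc
  have h2 : Real.exp ((z - 1) / c) ≤ c / (c + 1 - z) := by
    have := one_div_le_one_div_of_le hposd h1
    rwa [Real.exp_neg, one_div, inv_inv, one_div_div] at this
  refine h2.trans ?_
  rw [div_le_iff₀ hden]
  nlinarith

/-- Mixed case: `Z i` for `i < k` lies a.s. in `[zmin,1]` and `Z i` for `i ≥ k`
lies a.s. in `[1,zmax]`. Then
`E[∏ Z i] ≥ (∏_{i<k} E[Z i])^(1/zmin) · (∏_{i≥k} E[Z i])^(1/zmax)`. -/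
theorem bar_product_expectation_lower_mixed
    {Ω : Type*} [MeasurableSpace Ω] (μ : Measure Ω) [IsProbabilityMeasure μ]
    (p k : ℕ) (hk : k ≤ p) (Z : Fin p → Ω → ℝ) (zmin zmax : ℝ)
    (hzmin : 0 < zmin) (hzmin1 : zmin < 1) (hzmax : 1 ≤ zmax)
    (hmeas : ∀ i, Measurable (Z i))
    (hlow : ∀ i : Fin p, (i : ℕ) < k → ∀ᵐ ω ∂μ, zmin ≤ Z i ω ∧ Z i ω ≤ 1)
    (hhigh : ∀ i : Fin p, k ≤ (i : ℕ) → ∀ᵐ ω ∂μ, 1 ≤ Z i ω ∧ Z i ω ≤ zmax) :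
    (∏ i ∈ Finset.univ.filter (fun i : Fin p => (i : ℕ) < k), ∫ ω, Z i ω ∂μ) ^ ((1 : ℝ) / zmin) *
      (∏ i ∈ Finset.univ.filter (fun i : Fin p => k ≤ (i : ℕ)), ∫ ω, Z i ω ∂μ) ^ ((1 : ℝ) / zmax)
      ≤ ∫ ω, ∏ i, Z i ω ∂μ := by
  classical
  set c : Fin p → ℝ := fun i => if (i : ℕ) < k then zmin else zmax with hcdef
  have hcpos : ∀ i, 0 < c i := by
    intro i; by_cases h : (i : ℕ) < k <;> simp only [hcdef, h, if_true, if_false] <;> positivity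
  set M : ℝ := max 1 zmax with hM
  have hM1 : (1 : ℝ) ≤ M := le_max_left _ _
  -- a.e. pointwise facts
  have hae : ∀ᵐ ω ∂μ, ∀ i, 0 < Z i ω ∧ 0 ≤ (Z i ω - 1) * (c i - Z i ω) ∧ Z i ω ≤ M := by
    rw [ae_all_iff]
    intro i
    by_cases h : (i : ℕ) < k
    · filter_upwards [hlow i h] with ω hω
      obtain ⟨h1, h2⟩ := hω
      have hci : c i = zmin := if_pos h
      exact ⟨lt_of_lt_of_le hzmin h1, by rw [hci]; nlinarith, h2.trans hM1⟩
    · filter_upwards [hhigh i (le_of_not_gt h)] with ω hω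
      obtain ⟨h1, h2⟩ := hω
      have hci : c i = zmax := if_neg h
      exact ⟨lt_of_lt_of_le one_pos h1, by rw [hci]; nlinarith,
        h2.trans (le_max_right _ _)⟩
  -- integrability of each Z i
  have hZint : ∀ i, Integrable (Z i) μ := by
    intro i
    refine (integrable_const M).mono' (hmeas i).aestronglyMeasurable ?_
    filter_upwards [hae] with ω hω
    obtain ⟨h1, _, h3⟩ := hω i
    rw [Real.norm_eq_abs, abs_of_pos h1]; exact h3
  -- the auxiliary sum
  set S : Ω → ℝ := fun ω => ∑ i, (Z i ω - 1) / c i with hSdef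
  have hSmeas : Measurable S := by
    apply Finset.measurable_sum
    intro i _
    exact ((hmeas i).sub measurable_const).div_const _
  have hSint : Integrable S μ := by
    apply integrable_finset_sum
    intro i _
    exact (((hZint i).sub (integrable_const 1)).div_const _)
  -- pointwise: exp (S ω) ≤ ∏ Z i ω
  have hkey : ∀ᵐ ω ∂μ, Real.exp (S ω) ≤ ∏ i, Z i ω := by
    filter_upwards [hae] with ω hω
    rw [hSdef, Real.exp_sum]
    refine Finset.prod_le_prod (fun i _ => (Real.exp_pos _).le) (fun i _ => ?_)
    obtain ⟨h1, h2, _⟩ := hω i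
    exact exp_sub_one_div_le (hcpos i) h1 h2
  -- integrability of exp ∘ S and of the product
  have hexpBound : ∀ᵐ ω ∂μ, ‖Real.exp (S ω)‖ ≤ Real.exp (∑ i : Fin p, M / c i) := by
    filter_upwards [hae] with ω hω
    rw [Real.norm_eq_abs, abs_of_pos (Real.exp_pos _)]
    apply Real.exp_le_exp.2
    refine Finset.sum_le_sum (fun i _ => ?_)
    obtain ⟨h1, _, h3⟩ := hω i
    have := hcpos i
    apply div_le_div_of_nonneg_right _ this.le |>.trans_eq rfl
    linarith
  have hexpint : Integrable (fun ω => Real.exp (S ω)) μ :=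
    (integrable_const _).mono' (Real.measurable_exp.comp hSmeas).aestronglyMeasurable hexpBound
  have hprodmeas : Measurable (fun ω => ∏ i, Z i ω) :=
    Finset.measurable_prod _ (fun i _ => hmeas i)
  have hprodint : Integrable (fun ω => ∏ i, Z i ω) μ := by
    refine (integrable_const (M ^ p)).mono' hprodmeas.aestronglyMeasurable ?_
    filter_upwards [hae] with ω hω
    have hnn : 0 ≤ ∏ i, Z i ω := Finset.prod_nonneg (fun i _ => (hω i).1.le)
    rw [Real.norm_eq_abs, abs_of_nonneg hnn]
    calc (∏ i, Z i ω) ≤ ∏ _i : Fin p, M :=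
          Finset.prod_le_prod (fun i _ => (hω i).1.le) (fun i _ => (hω i).2.2)
      _ = M ^ p := by simp
  -- Step A: ∫ exp S ≤ ∫ ∏ Z
  have stepA : ∫ ω, Real.exp (S ω) ∂μ ≤ ∫ ω, ∏ i, Z i ω ∂μ :=
    integral_mono_ae hexpint hprodint hkey
  -- Step B: Jensen
  have stepB : Real.exp (∫ ω, S ω ∂μ) ≤ ∫ ω, Real.exp (S ω) ∂μ := by
    exact convexOn_exp.map_integral_le Real.continuous_exp.continuousOn isClosed_univ
      (Filter.Eventually.of_forall (fun _ => Set.mem_univ _)) hSint hexpint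
  -- compute ∫ S
  have hSval : ∫ ω, S ω ∂μ = ∑ i, ((∫ ω, Z i ω ∂μ) - 1) / c i := by
    rw [hSdef, integral_finset_sum]
    · refine Finset.sum_congr rfl (fun i _ => ?_)
      rw [integral_div, integral_sub (hZint i) (integrable_const 1)]
      simp
    · exact fun i _ => ((hZint i).sub (integrable_const 1)).div_const _
  -- bounds on expectations
  have hEpos : ∀ i, 0 < ∫ ω, Z i ω ∂μ := by
    intro i
    by_cases h : (i : ℕ) < k
    · have : zmin = ∫ _ω, zmin ∂μ := by simp
      refine lt_of_lt_of_le hzmin ?_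
      rw [this]
      exact integral_mono_ae (integrable_const _) (hZint i)
        ((hlow i h).mono (fun ω hω => hω.1))
    · have : (1 : ℝ) = ∫ _ω, (1 : ℝ) ∂μ := by simp
      refine lt_of_lt_of_le one_pos ?_
      rw [this]
      exact integral_mono_ae (integrable_const _) (hZint i)
        ((hhigh i (le_of_not_gt h)).mono (fun ω hω => hω.1))
  set E : Fin p → ℝ := fun i => ∫ ω, Z i ω ∂μ with hEdef
  -- Step C: the LHS is at most exp (∫ S)
  have hPlow : (0:ℝ) < ∏ i ∈ Finset.univ.filter (fun i : Fin p => (i : ℕ) < k), E i :=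
    Finset.prod_pos (fun i _ => hEpos i)
  have hPhigh : (0:ℝ) < ∏ i ∈ Finset.univ.filter (fun i : Fin p => k ≤ (i : ℕ)), E i :=
    Finset.prod_pos (fun i _ => hEpos i)
  have stepC :
      (∏ i ∈ Finset.univ.filter (fun i : Fin p => (i : ℕ) < k), E i) ^ ((1 : ℝ) / zmin) *
        (∏ i ∈ Finset.univ.filter (fun i : Fin p => k ≤ (i : ℕ)), E i) ^ ((1 : ℝ) / zmax)
        ≤ Real.exp (∫ ω, S ω ∂μ) := by
    rw [Real.rpow_def_of_pos hPlow, Real.rpow_def_of_pos hPhigh, ← Real.exp_add]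
    apply Real.exp_le_exp.2
    rw [hSval]
    have hlogP : ∀ s : Finset (Fin p),
        Real.log (∏ i ∈ s, E i) = ∑ i ∈ s, Real.log (E i) := by
      intro s
      exact Real.log_prod (s := s) (fun i _ => (hEpos i).ne')
    rw [hlogP, hlogP, Finset.sum_mul, Finset.sum_mul]
    have hsplit : (∑ i, (E i - 1) / c i) =
        (∑ i ∈ Finset.univ.filter (fun i : Fin p => (i : ℕ) < k), (E i - 1) / c i) +
        (∑ i ∈ Finset.univ.filter (fun i : Fin p => k ≤ (i : ℕ)), (E i - 1) / c i) := by
      rw [← Finset.sum_filter_add_sum_filter_not Finset.univ (fun i : Fin p => (i : ℕ) < k)]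
      congr 1
      apply Finset.sum_congr _ (fun _ _ => rfl)
      apply Finset.filter_congr
      intro i _
      simp [not_lt]
    rw [hsplit]
    apply add_le_add
    · refine Finset.sum_le_sum (fun i hi => ?_)
      have hci : c i = zmin := if_pos (Finset.mem_filter.1 hi).2
      rw [hci]
      have hlog : Real.log (E i) ≤ E i - 1 := Real.log_le_sub_one_of_pos (hEpos i)
      rw [mul_one_div]
      exact div_le_div_of_nonneg_right hlog hzmin.le |>.trans_eq rfl
    · refine Finset.sum_le_sum (fun i hi => ?_)
      have hci : c i = zmax := if_neg (not_lt.2 (Finset.mem_filter.1 hi).2)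
      rw [hci]
      have hlog : Real.log (E i) ≤ E i - 1 := Real.log_le_sub_one_of_pos (hEpos i)
      rw [mul_one_div]
      exact div_le_div_of_nonneg_right hlog (lt_of_lt_of_le one_pos hzmax).le |>.trans_eq rfl
  exact stepC.trans (stepB.trans stepA)
end
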